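/- There is a constant c₂ > 0 (independent of n) such that the Cayley graph of the symmetric group S_n with generating set {(12), (12…n), (12…n)⁻¹} has spectral gap λ ≥ c₂·n⁻³, where λ is the least nonzero eigenvalue of minus the graph Laplacian. -/

import Mathlib

noncomputable section
open Matrix

/-- The graph Laplacian: `Δ f (x) = Σ_{y ~ x} (f y - f x)`. -/
def lap {V : Type*} (G : SimpleGraph V) (f : V → ℝ) (x : V) : ℝ :=
  ∑ᶠ y ∈ {y | G.Adj x y}, (f y - f x)

/-- The carré du champ `Γ(f,g)(x) = (1/2) Σ_{y ~ x} (f x - f y)(g x - g y)`. -/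
def gam {V : Type*} (G : SimpleGraph V) (f g : V → ℝ) (x : V) : ℝ :=
  (1/2) * ∑ᶠ y ∈ {y | G.Adj x y}, (f x - f y) * (g x - g y)

/-- The iterated carré du champ `Γ₂(f) = (1/2) Δ Γ(f) - Γ(f, Δ f)`. -/
def gam2 {V : Type*} (G : SimpleGraph V) (f : V → ℝ) (x : V) : ℝ :=
  (1/2) * lap G (gam G f f) x - gam G f (lap G f) x

/-- `Ric(G) ≥ K` : the Bochner inequality `Γ₂(f)(x) ≥ K Γ(f)(x)` holds for all `f, x`. -/
def RicGE {V : Type*} (G : SimpleGraph V) (K : ℝ) : Prop :=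
  ∀ (f : V → ℝ) (x : V), K * gam G f f x ≤ gam2 G f x

open Classical in
/-- Degree of a vertex. -/
def degC {V : Type*} [Fintype V] (G : SimpleGraph V) (x : V) : ℕ :=
  (Finset.univ.filter fun y => G.Adj x y).card

open Classical in
/-- The Laplacian matrix `Δ = A - D` (negative semidefinite). -/
def lapMat {V : Type*} [Fintype V] (G : SimpleGraph V) : Matrix V V ℝ :=
  Matrix.of fun x y => (if G.Adj x y then (1:ℝ) else 0) - (if x = y then (degC G x : ℝ) else 0)

/-- The spectral gap: least nonzero eigenvalue of `-Δ`. -/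
def spectralGap {V : Type*} [Fintype V] (G : SimpleGraph V) : ℝ :=
  sInf {μ : ℝ | μ ≠ 0 ∧ ∃ f : V → ℝ, f ≠ 0 ∧ (-(lapMat G)) *ᵥ f = μ • f}

open Classical in
/-- Number of edges from `A` to its complement. -/
def boundary {V : Type*} [Fintype V] (G : SimpleGraph V) (A : Finset V) : ℕ :=
  ∑ x ∈ A, (Finset.univ.filter fun y => G.Adj x y ∧ y ∉ A).card

/-- The Cheeger (edge-isoperimetric) constant. -/
def cheeger {V : Type*} [Fintype V] (G : SimpleGraph V) : ℝ :=
  sInf {r : ℝ | ∃ A : Finset V, 0 < A.card ∧ 2 * A.card ≤ Fintype.card V ∧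
    r = (boundary G A : ℝ) / (A.card : ℝ)}

/-- The heat semigroup `P_t f = exp(tΔ) f`. -/
def heat {V : Type*} [Fintype V] [DecidableEq V] (G : SimpleGraph V) (t : ℝ) (f : V → ℝ) :
    V → ℝ :=
  (NormedSpace.exp (t • lapMat G)) *ᵥ f

/-- The generating set `{(1 2), (1 2 ⋯ n), (1 2 ⋯ n)⁻¹}` in the symmetric group `S_{n+2}`,
realized as permutations of `Fin (n+2)`; `finRotate` is the long cycle. -/
def snGen (n : ℕ) : Set (Equiv.Perm (Fin (n + 2))) :=
  {Equiv.swap 0 1, finRotate (n + 2), (finRotate (n + 2))⁻¹}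

/-- The Cayley graph of `S_{n+2}` with generating set `snGen n`. -/
def snGraph (n : ℕ) : SimpleGraph (Equiv.Perm (Fin (n + 2))) where
  Adj x y := x ≠ y ∧ x⁻¹ * y ∈ snGen n
  symm := by
    refine ⟨?_⟩
    rintro x y ⟨hne, hs⟩
    refine ⟨hne.symm, ?_⟩
    have h : (x⁻¹ * y)⁻¹ ∈ snGen n := by
      rcases hs with h | h | h <;> rw [h] <;> simp [snGen, Equiv.swap_inv]
    simpa [_root_.mul_inv_rev] using h
  loopless := by refine ⟨?_⟩; rintro x ⟨hne, -⟩; exact hne rfl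


open Finset Equiv
open Fin.NatCast Fin.CommRing

theorem Equiv.Perm.apply_inv_self {α : Type*} (e : Equiv.Perm α) (x : α) : e (e⁻¹ x) = x :=
  e.apply_symm_apply x

theorem Equiv.Perm.inv_apply_self {α : Type*} (e : Equiv.Perm α) (x : α) : e⁻¹ (e x) = x :=
  e.symm_apply_apply x

namespace SGL

variable {n : ℕ}

abbrev G (n : ℕ) := Equiv.Perm (Fin n)

def vecD (f : G n → ℝ) (g : G n) : EuclideanSpace ℝ (G n) := WithLp.toLp 2 (fun x => f (x * g) - f x)

def Dp (f : G n → ℝ) (g : G n) : ℝ := ∑ x : G n, (f (x * g) - f x)^2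

lemma norm_eq_sqrt_sum (v : EuclideanSpace ℝ (G n)) : ‖v‖ = Real.sqrt (∑ x, (v x)^2) := by
  rw [EuclideanSpace.norm_eq]
  congr 1
  exact Finset.sum_congr rfl fun i _ => by rw [Real.norm_eq_abs, sq_abs]

lemma norm_sq_eq (v : EuclideanSpace ℝ (G n)) : ‖v‖^2 = ∑ x, (v x)^2 := by
  rw [norm_eq_sqrt_sum, Real.sq_sqrt (by positivity)]

lemma Dp_eq_norm_sq (f : G n → ℝ) (g : G n) : Dp f g = ‖vecD f g‖^2 := by
  rw [norm_sq_eq]; rfl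

lemma Dp_nonneg (f : G n → ℝ) (g : G n) : 0 ≤ Dp f g :=
  Finset.sum_nonneg fun _ _ => sq_nonneg _

lemma vecD_one (f : G n → ℝ) : vecD f 1 = 0 := by
  ext x; simp [vecD]

lemma sum_translate (F : G n → ℝ) (g : G n) : ∑ x : G n, F (x * g) = ∑ x : G n, F x :=
  Fintype.sum_equiv (Equiv.mulRight g) _ _ (fun _ => rfl)

lemma norm_vecD_inv (f : G n → ℝ) (g : G n) : ‖vecD f g⁻¹‖ = ‖vecD f g‖ := by
  rw [norm_eq_sqrt_sum, norm_eq_sqrt_sum]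
  congr 1
  have h2 := sum_translate (fun x => (f (x * g⁻¹) - f x)^2) g
  calc ∑ x : G n, (vecD f g⁻¹ x)^2 = ∑ x : G n, (f (x * g * g⁻¹) - f (x * g))^2 := h2.symm
    _ = ∑ x : G n, (vecD f g x)^2 := by
        refine Finset.sum_congr rfl fun x _ => ?_
        have : x * g * g⁻¹ = x := by group
        rw [this]
        show (f x - f (x * g))^2 = (f (x * g) - f x)^2
        ring

lemma norm_vecD_mul_le (f : G n → ℝ) (g h : G n) :
    ‖vecD f (g * h)‖ ≤ ‖vecD f g‖ + ‖vecD f h‖ := by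
  set w : EuclideanSpace ℝ (G n) := WithLp.toLp 2 (fun x => vecD f h (x * g)) with hw
  have key : vecD f (g * h) = vecD f g + w := by
    ext x
    show f (x * (g * h)) - f x = (f (x * g) - f x) + (f ((x * g) * h) - f (x * g))
    rw [← mul_assoc]; ring
  rw [key]
  refine (norm_add_le _ _).trans ?_
  gcongr
  rw [norm_eq_sqrt_sum, norm_eq_sqrt_sum]
  apply le_of_eq
  congr 1
  exact sum_translate (fun x => (vecD f h x)^2) g

lemma norm_vecD_pow_le (f : G n → ℝ) (g : G n) (j : ℕ) :
    ‖vecD f (g ^ j)‖ ≤ j * ‖vecD f g‖ := by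
  induction j with
  | zero => simp [pow_zero, vecD_one]
  | succ j ih =>
      rw [pow_succ]
      refine (norm_vecD_mul_le f _ _).trans ?_
      push_cast
      nlinarith [norm_nonneg (vecD f g)]

lemma norm_vecD_conj_le (f : G n → ℝ) (σ g : G n) :
    ‖vecD f (σ * g * σ⁻¹)‖ ≤ 2 * ‖vecD f σ‖ + ‖vecD f g‖ := by
  refine (norm_vecD_mul_le f (σ * g) σ⁻¹).trans ?_
  have := norm_vecD_mul_le f σ g
  rw [norm_vecD_inv]
  linarith

section Rot
variable {m : ℕ}

lemma rot_pow_apply (j : ℕ) (i : Fin (m + 2)) :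
    ((finRotate (m + 2)) ^ j) i = i + (j : Fin (m + 2)) := by
  induction j with
  | zero => simp
  | succ j ih =>
      rw [pow_succ']
      show finRotate (m+2) (((finRotate (m+2)) ^ j) i) = _
      rw [ih, finRotate_succ_apply]
      push_cast
      ring

lemma swap_zero_succ (d : ℕ) (hd : 1 ≤ d) (hdn : d + 1 < m + 2) :
    Equiv.swap (0 : Fin (m + 2)) ((d + 1 : ℕ) : Fin (m + 2)) =
      Equiv.swap 0 1 * (finRotate (m + 2) * Equiv.swap (0 : Fin (m+2)) ((d : ℕ) : Fin (m+2)) *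
        (finRotate (m + 2))⁻¹) * (Equiv.swap (0 : Fin (m+2)) 1)⁻¹ := by
  have hd1 : ((d + 1 : ℕ) : Fin (m + 2)) ≠ 0 := by
    apply Fin.ne_of_val_ne
    rw [Fin.val_cast_of_lt hdn]
    simp
  have hd2 : ((d + 1 : ℕ) : Fin (m + 2)) ≠ 1 := by
    apply Fin.ne_of_val_ne
    rw [Fin.val_cast_of_lt hdn, Fin.val_one]
    omega
  rw [← swap_apply_apply (finRotate (m+2)) (0 : Fin (m+2)) ((d:ℕ) : Fin (m+2))]
  rw [finRotate_succ_apply, zero_add]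
  have : finRotate (m+2) ((d : ℕ) : Fin (m+2)) = ((d + 1 : ℕ) : Fin (m + 2)) := by
    rw [finRotate_succ_apply]; push_cast; ring
  rw [this]
  rw [← swap_apply_apply (Equiv.swap (0 : Fin (m+2)) 1) (1 : Fin (m+2)) _]
  rw [swap_apply_right]
  rw [swap_apply_of_ne_of_ne hd1 hd2]

lemma norm_vecD_swap_zero (f : G (m + 2) → ℝ) (β : ℝ)
    (ha : ‖vecD f (Equiv.swap (0 : Fin (m+2)) 1)‖ ≤ β)
    (hc : ‖vecD f (finRotate (m + 2))‖ ≤ β) :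
    ∀ d : ℕ, d < m + 2 → ‖vecD f (Equiv.swap (0 : Fin (m+2)) ((d : ℕ) : Fin (m+2)))‖ ≤ 4 * d * β := by
  have hβ : 0 ≤ β := le_trans (norm_nonneg _) ha
  intro d
  induction d with
  | zero =>
      intro _
      simp only [Nat.cast_zero, Equiv.swap_self]
      have : (Equiv.refl (Fin (m+2))) = (1 : G (m+2)) := rfl
      rw [this, vecD_one]
      simp
  | succ d ih =>
      intro hdn
      by_cases hd : d = 0
      · subst hd
        have : ((0 + 1 : ℕ) : Fin (m + 2)) = 1 := by norm_num
        rw [this]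
        refine ha.trans ?_
        push_cast
        nlinarith
      · have hd1 : 1 ≤ d := Nat.one_le_iff_ne_zero.mpr hd
        rw [swap_zero_succ d hd1 hdn]
        have h1 := norm_vecD_conj_le f (Equiv.swap (0 : Fin (m+2)) 1)
          (finRotate (m + 2) * Equiv.swap (0 : Fin (m+2)) ((d : ℕ) : Fin (m+2)) * (finRotate (m + 2))⁻¹)
        have h2 := norm_vecD_conj_le f (finRotate (m+2))
          (Equiv.swap (0 : Fin (m+2)) ((d : ℕ) : Fin (m+2)))
        have h3 := ih (by omega)
        refine h1.trans ?_
        push_cast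
        nlinarith

lemma norm_vecD_swap (f : G (m + 2) → ℝ) (β : ℝ)
    (ha : ‖vecD f (Equiv.swap (0 : Fin (m+2)) 1)‖ ≤ β)
    (hc : ‖vecD f (finRotate (m + 2))‖ ≤ β)
    (k q : Fin (m + 2)) (hkq : k.val ≤ q.val) :
    ‖vecD f (Equiv.swap k q)‖ ≤ 6 * (m + 2) * β := by
  have hβ : 0 ≤ β := le_trans (norm_nonneg _) ha
  set c := finRotate (m + 2)
  set j := k.val
  set d := q.val - k.val
  have hq : d + j = q.val := Nat.sub_add_cancel hkq
  have key : Equiv.swap k q = c ^ j * Equiv.swap (0 : Fin (m+2)) ((d:ℕ) : Fin (m+2)) * (c ^ j)⁻¹ := by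
    rw [← swap_apply_apply (c ^ j) (0 : Fin (m+2)) ((d:ℕ) : Fin (m+2))]
    rw [rot_pow_apply, rot_pow_apply]
    congr 1
    · rw [zero_add]
      exact (Fin.cast_val_eq_self k).symm
    · have : ((d : ℕ) : Fin (m+2)) + ((j : ℕ) : Fin (m+2)) = ((d + j : ℕ) : Fin (m+2)) := by
        push_cast; ring
      rw [this, hq]
      exact (Fin.cast_val_eq_self q).symm
  rw [key]
  have h1 := norm_vecD_conj_le f (c ^ j) (Equiv.swap (0 : Fin (m+2)) ((d:ℕ) : Fin (m+2)))
  have h2 := norm_vecD_pow_le f c j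
  have h3 := norm_vecD_swap_zero f β ha hc d (by omega)
  have hj : (j : ℝ) ≤ (m + 2 : ℝ) := by exact_mod_cast le_of_lt (lt_of_le_of_lt hkq q.isLt)
  have hdd : (d : ℝ) ≤ (m + 2 : ℝ) := by
    have : d < m + 2 := by omega
    exact_mod_cast le_of_lt this
  have hcb : ‖vecD f c‖ ≤ β := hc
  calc ‖vecD f (c ^ j * _ * (c ^ j)⁻¹)‖ ≤ 2 * ‖vecD f (c ^ j)‖ + _ := h1
    _ ≤ 6 * (m + 2) * β := by nlinarith [norm_nonneg (vecD f (c ^ j))]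

end Rot

/-! ## prefix classes -/

def Pc (k : ℕ) (x : G n) : Finset (G n) :=
  univ.filter (fun y => ∀ i : Fin n, (i : ℕ) < k → y i = x i)

lemma mem_Pc {k : ℕ} {x y : G n} :
    y ∈ Pc k x ↔ ∀ i : Fin n, (i : ℕ) < k → y i = x i := by
  simp [Pc]

lemma self_mem_Pc {k : ℕ} (x : G n) : x ∈ Pc k x := mem_Pc.2 fun _ _ => rfl

lemma Pc_symm {k : ℕ} {x y : G n} (h : y ∈ Pc k x) : x ∈ Pc k y :=
  mem_Pc.2 fun i hi => (mem_Pc.1 h i hi).symm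

lemma Pc_congr {k : ℕ} {x y : G n} (h : y ∈ Pc k x) : Pc k y = Pc k x := by
  ext z
  simp only [mem_Pc]
  constructor
  · intro hz i hi; rw [hz i hi, mem_Pc.1 h i hi]
  · intro hz i hi
    rw [hz i hi, ← mem_Pc.1 h i hi]

def cc (n k : ℕ) : ℕ := (Pc k (1 : G n)).card

lemma card_Pc (k : ℕ) (x : G n) : (Pc k x).card = cc n k := by
  apply Finset.card_nbij' (i := fun z => x⁻¹ * z) (j := fun z => x * z)
  · intro z hz
    rw [Finset.mem_coe, mem_Pc] at hz ⊢
    intro i hi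
    show x⁻¹ (z i) = (1 : G n) i
    rw [hz i hi]
    simp
  · intro z hz
    rw [Finset.mem_coe, mem_Pc] at hz ⊢
    intro i hi
    show x (z i) = x i
    rw [hz i hi]
    rfl
  · intro z _; group
  · intro z _; group

lemma cc_pos (k : ℕ) : 0 < cc n k :=
  Finset.card_pos.2 ⟨1, self_mem_Pc 1⟩

def Ee (k : ℕ) (f : G n → ℝ) (x : G n) : ℝ := (∑ y ∈ Pc k x, f y) / (cc n k)

lemma Pc_top (x : G n) : Pc n x = {x} := by
  ext y
  simp only [mem_Pc, Finset.mem_singleton]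
  constructor
  · intro h; exact Equiv.ext fun i => h i i.isLt
  · intro h; subst h; exact fun _ _ => rfl

lemma Ee_top (f : G n → ℝ) (x : G n) : Ee n f x = f x := by
  have h1 : cc n n = 1 := by
    rw [cc, Pc_top, Finset.card_singleton]
  rw [Ee, Pc_top, Finset.sum_singleton, h1, Nat.cast_one, div_one]

lemma Pc_zero (x : G n) : Pc 0 x = univ := by
  ext y; simp [mem_Pc]

lemma Ee_zero (f : G n → ℝ) (x : G n) : Ee 0 f x = (∑ y, f y) / (cc n 0) := by
  rw [Ee, Pc_zero]

lemma Ee_congr {k : ℕ} {x y : G n} (h : y ∈ Pc k x) (f : G n → ℝ) : Ee k f y = Ee k f x := by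
  rw [Ee, Ee, Pc_congr h]

lemma sum_sum_Pc (k : ℕ) (F : G n → G n → ℝ) :
    ∑ x : G n, ∑ y ∈ Pc k x, F x y = ∑ y : G n, ∑ x ∈ Pc k y, F x y := by
  simp only [Pc, Finset.sum_filter]
  rw [Finset.sum_comm]
  refine Finset.sum_congr rfl fun y _ => Finset.sum_congr rfl fun x _ => ?_
  by_cases h : ∀ i : Fin n, (i : ℕ) < k → y i = x i
  · rw [if_pos h, if_pos (fun i hi => (h i hi).symm)]
  · rw [if_neg h, if_neg (fun hc => h fun i hi => (hc i hi).symm)]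

lemma sum_Ee_mul (k : ℕ) (f g : G n → ℝ) :
    ∑ x : G n, Ee k f x * g x = ∑ x : G n, f x * Ee k g x := by
  have l1 : ∀ x : G n, Ee k f x * g x = ∑ y ∈ Pc k x, f y * g x / cc n k := by
    intro x
    rw [Ee, div_mul_eq_mul_div, Finset.sum_mul, Finset.sum_div]
  have l2 : ∀ y : G n, f y * Ee k g y = ∑ x ∈ Pc k y, f y * g x / cc n k := by
    intro y
    rw [Ee, ← mul_div_assoc, Finset.mul_sum, Finset.sum_div]
  rw [Finset.sum_congr rfl fun x _ => l1 x, Finset.sum_congr rfl fun y _ => l2 y]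
  exact sum_sum_Pc k _

lemma Ee_of_const {k : ℕ} {h : G n → ℝ} (hc : ∀ x y : G n, y ∈ Pc k x → h y = h x) :
    ∀ x, Ee k h x = h x := by
  intro x
  rw [Ee, Finset.sum_congr rfl (fun y hy => hc x y hy), Finset.sum_const, card_Pc]
  have hcc : (cc n k : ℝ) ≠ 0 := Nat.cast_ne_zero.2 (cc_pos k).ne'
  rw [nsmul_eq_mul]
  field_simp

lemma Pc_mono {k : ℕ} {x y : G n} (h : y ∈ Pc (k+1) x) : y ∈ Pc k x :=
  mem_Pc.2 fun i hi => mem_Pc.1 h i (by omega)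

lemma step_eq (k : ℕ) (f : G n → ℝ) :
    ∑ x : G n, (Ee (k+1) f x - Ee k f x)^2
      = ∑ x : G n, f x * Ee (k+1) f x - ∑ x : G n, f x * Ee k f x := by
  have e1 : ∑ x : G n, Ee (k+1) f x * Ee (k+1) f x = ∑ x : G n, f x * Ee (k+1) f x := by
    rw [sum_Ee_mul]
    refine Finset.sum_congr rfl fun x _ => ?_
    rw [Ee_of_const (fun a b hb => Ee_congr hb f) x]
  have e2 : ∑ x : G n, Ee (k+1) f x * Ee k f x = ∑ x : G n, f x * Ee k f x := by
    rw [sum_Ee_mul]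
    refine Finset.sum_congr rfl fun x _ => ?_
    rw [Ee_of_const (fun a b hb => Ee_congr (Pc_mono hb) f) x]
  have e3 : ∑ x : G n, Ee k f x * Ee k f x = ∑ x : G n, f x * Ee k f x := by
    rw [sum_Ee_mul]
    refine Finset.sum_congr rfl fun x _ => ?_
    rw [Ee_of_const (fun a b hb => Ee_congr hb f) x]
  have expand : ∑ x : G n, (Ee (k+1) f x - Ee k f x)^2
      = (∑ x : G n, Ee (k+1) f x * Ee (k+1) f x)
        - 2 * (∑ x : G n, Ee (k+1) f x * Ee k f x)
        + ∑ x : G n, Ee k f x * Ee k f x := by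
    rw [Finset.mul_sum, ← Finset.sum_sub_distrib, ← Finset.sum_add_distrib]
    exact Finset.sum_congr rfl fun x _ => by ring
  rw [expand, e1, e2, e3]
  ring


/-! ## partition by value at position k -/

def Qs (n k : ℕ) : Finset (Fin n) := univ.filter (fun q => k ≤ (q : ℕ))

lemma mem_Qs {k : ℕ} {q : Fin n} : q ∈ Qs n k ↔ k ≤ (q : ℕ) := by simp [Qs]

lemma card_Qs (k : ℕ) (hk : k ≤ n) [NeZero n] : (Qs n k).card = n - k := by
  rw [show n - k = (Finset.range (n - k)).card from (Finset.card_range _).symm]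
  refine Finset.card_nbij' (fun q => (q : ℕ) - k) (fun r => ((k + r : ℕ) : Fin n)) ?_ ?_ ?_ ?_
  · intro q hq
    rw [Finset.mem_coe, mem_Qs] at hq
    dsimp only
    rw [Finset.mem_coe, Finset.mem_range]
    have := q.isLt
    omega
  · intro r hr
    rw [Finset.mem_coe, Finset.mem_range] at hr
    dsimp only
    rw [Finset.mem_coe, mem_Qs, Fin.val_cast_of_lt (by omega)]
    omega
  · intro q hq
    rw [Finset.mem_coe, mem_Qs] at hq
    dsimp only
    rw [Nat.add_sub_cancel' hq]
    exact Fin.cast_val_eq_self q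
  · intro r hr
    rw [Finset.mem_coe, Finset.mem_range] at hr
    dsimp only
    rw [Fin.val_cast_of_lt (by omega)]
    omega

section Partition

variable [NeZero n] {k : ℕ} (hk : k < n)

lemma kappa_val (hk : k < n) : (((k : ℕ) : Fin n) : ℕ) = k := Fin.val_cast_of_lt hk

lemma Pc_biUnion (hk : k < n) (x : G n) :
    Pc k x = (Qs n k).biUnion (fun q => Pc (k+1) (x * Equiv.swap ((k : ℕ) : Fin n) q)) := by
  set κ : Fin n := ((k : ℕ) : Fin n) with hκdef
  have hκ : (κ : ℕ) = k := kappa_val hk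
  ext y
  rw [Finset.mem_biUnion]
  constructor
  · intro hy
    refine ⟨x⁻¹ (y κ), ?_, ?_⟩
    · rw [mem_Qs]
      by_contra hlt
      push_neg at hlt
      have h1 : y (x⁻¹ (y κ)) = x (x⁻¹ (y κ)) := mem_Pc.1 hy _ hlt
      rw [Equiv.Perm.apply_inv_self] at h1
      have h2 : x⁻¹ (y κ) = κ := y.injective h1
      rw [h2, hκ] at hlt
      omega
    · rw [mem_Pc]
      intro i hi
      rcases Nat.lt_succ_iff_lt_or_eq.1 hi with hi' | hi'
      · have hiκ : i ≠ κ := fun h => by rw [h, hκ] at hi'; omega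
        have hiq : i ≠ x⁻¹ (y κ) := by
          intro h
          have hthis := mem_Pc.1 hy i hi'
          rw [h, Equiv.Perm.apply_inv_self] at hthis
          exact hiκ (by rw [h]; exact y.injective hthis)
        show y i = x (Equiv.swap κ (x⁻¹ (y κ)) i)
        rw [Equiv.swap_apply_of_ne_of_ne hiκ hiq]
        exact mem_Pc.1 hy i hi'
      · have hiκ : i = κ := Fin.ext (by rw [hκ]; exact hi')
        rw [hiκ, Equiv.Perm.mul_apply, Equiv.swap_apply_left, Equiv.Perm.apply_inv_self]
  · rintro ⟨q, hq, hy⟩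
    rw [mem_Qs] at hq
    rw [mem_Pc]
    intro i hi
    have hiκ : i ≠ κ := fun h => by rw [h, hκ] at hi; omega
    have hiq : i ≠ q := fun h => by rw [h] at hi; omega
    have := mem_Pc.1 hy i (by omega)
    rw [this]
    show x (Equiv.swap κ q i) = x i
    rw [Equiv.swap_apply_of_ne_of_ne hiκ hiq]

lemma Pc_disj (hk : k < n) (x : G n) :
    ∀ q ∈ Qs n k, ∀ q' ∈ Qs n k, q ≠ q' →
      Disjoint (Pc (k+1) (x * Equiv.swap ((k : ℕ) : Fin n) q))
        (Pc (k+1) (x * Equiv.swap ((k : ℕ) : Fin n) q')) := by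
  set κ : Fin n := ((k : ℕ) : Fin n) with hκdef
  have hκ : (κ : ℕ) = k := kappa_val hk
  intro q _ q' _ hne
  rw [Finset.disjoint_left]
  intro z hz hz'
  have h1 : z κ = x q := by
    have := mem_Pc.1 hz κ (by omega)
    rw [this]
    show x (Equiv.swap κ q κ) = x q
    rw [Equiv.swap_apply_left]
  have h2 : z κ = x q' := by
    have := mem_Pc.1 hz' κ (by omega)
    rw [this]
    show x (Equiv.swap κ q' κ) = x q'
    rw [Equiv.swap_apply_left]
  exact hne (x.injective (h1 ▸ h2 ▸ rfl))

lemma sum_Pc_eq (hk : k < n) (x : G n) (F : G n → ℝ) :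
    ∑ y ∈ Pc k x, F y
      = ∑ q ∈ Qs n k, ∑ z ∈ Pc (k+1) (x * Equiv.swap ((k : ℕ) : Fin n) q), F z := by
  rw [Pc_biUnion hk x]
  exact Finset.sum_biUnion (Pc_disj hk x)

lemma cc_succ (hk : k < n) : cc n k = (n - k) * cc n (k+1) := by
  have h1 : (Pc k (1 : G n)).card
      = ∑ q ∈ Qs n k, (Pc (k+1) ((1 : G n) * Equiv.swap ((k : ℕ) : Fin n) q)).card := by
    rw [Pc_biUnion hk (1 : G n)]
    exact Finset.card_biUnion (Pc_disj hk 1)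
  rw [cc, h1]
  rw [Finset.sum_congr rfl (fun q _ => card_Pc (k+1) _), Finset.sum_const, card_Qs k hk.le,
    smul_eq_mul]

lemma Ee_avg (hk : k < n) (f : G n → ℝ) (x : G n) :
    Ee k f x = (∑ q ∈ Qs n k, Ee (k+1) f (x * Equiv.swap ((k : ℕ) : Fin n) q))
      / ((n - k : ℕ) : ℝ) := by
  have hc1 : ((cc n (k+1) : ℝ)) ≠ 0 := Nat.cast_ne_zero.2 (cc_pos _).ne'
  have hnk : ((n - k : ℕ) : ℝ) ≠ 0 := Nat.cast_ne_zero.2 (by omega)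
  rw [Ee]
  rw [sum_Pc_eq hk x f]
  rw [Finset.sum_congr rfl (fun q _ => by rw [Ee] : ∀ q ∈ Qs n k,
    Ee (k+1) f (x * Equiv.swap ((k : ℕ) : Fin n) q)
      = (∑ z ∈ Pc (k+1) (x * Equiv.swap ((k : ℕ) : Fin n) q), f z) / (cc n (k+1)))]
  rw [← Finset.sum_div]
  rw [div_div]
  congr 1
  rw [cc_succ hk]
  push_cast
  ring


lemma sq_div_le {α : Type*} (s : Finset α) (g : α → ℝ) :
    ((∑ y ∈ s, g y) / (s.card : ℝ))^2 ≤ (∑ y ∈ s, (g y)^2) / (s.card : ℝ) := by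
  rcases s.eq_empty_or_nonempty with h | h
  · subst h; simp
  · have hc : (0:ℝ) < (s.card : ℝ) := by exact_mod_cast Finset.card_pos.2 h
    have CS := Finset.sum_mul_sq_le_sq_mul_sq s g (fun _ => 1)
    simp only [mul_one, one_pow, Finset.sum_const, nsmul_eq_mul] at CS
    rw [div_pow, div_le_div_iff₀ (by positivity) hc]
    calc (∑ y ∈ s, g y)^2 * (s.card : ℝ)
        ≤ ((∑ y ∈ s, (g y)^2) * (s.card : ℝ)) * (s.card : ℝ) := by nlinarith
      _ = (∑ y ∈ s, (g y)^2) * ((s.card : ℝ))^2 := by ring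

lemma sum_shift (hk : k < n) {q : Fin n} (hq : q ∈ Qs n k) (x : G n) (f : G n → ℝ) :
    ∑ z ∈ Pc (k+1) (x * Equiv.swap ((k : ℕ) : Fin n) q), f z
      = ∑ y ∈ Pc (k+1) x, f (y * Equiv.swap ((k : ℕ) : Fin n) (y⁻¹ (x q))) := by
  set κ : Fin n := ((k : ℕ) : Fin n) with hκdef
  have hκ : (κ : ℕ) = k := kappa_val hk
  have hqk : k ≤ (q : ℕ) := mem_Qs.1 hq
  -- facts about membership in the left class
  have zpre : ∀ z ∈ Pc (k+1) (x * Equiv.swap κ q), ∀ i : Fin n, (i : ℕ) < k → z i = x i := by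
    intro z hz i hi
    have h1 := mem_Pc.1 hz i (by omega)
    rw [h1, Equiv.Perm.mul_apply,
      Equiv.swap_apply_of_ne_of_ne (fun h => by rw [h, hκ] at hi; omega)
        (fun h => by rw [h] at hi; omega)]
  have zκ : ∀ z ∈ Pc (k+1) (x * Equiv.swap κ q), z κ = x q := by
    intro z hz
    have h1 := mem_Pc.1 hz κ (by omega)
    rw [h1, Equiv.Perm.mul_apply, Equiv.swap_apply_left]
  have hu : ∀ z ∈ Pc (k+1) (x * Equiv.swap κ q), ¬ ((z⁻¹ (x κ) : ℕ) < k) := by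
    intro z hz hlt
    have h1 : z (z⁻¹ (x κ)) = x (z⁻¹ (x κ)) := zpre z hz _ hlt
    rw [Equiv.Perm.apply_inv_self] at h1
    have h2 : z⁻¹ (x κ) = κ := x.injective h1.symm
    rw [h2, hκ] at hlt
    omega
  -- facts about membership in the right class
  have ypre : ∀ y ∈ Pc (k+1) x, ∀ i : Fin n, (i : ℕ) < k + 1 → y i = x i := by
    intro y hy i hi
    exact mem_Pc.1 hy i hi
  have hr : ∀ y ∈ Pc (k+1) x, ¬ ((y⁻¹ (x q) : ℕ) < k) := by
    intro y hy hlt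
    have h1 : y (y⁻¹ (x q)) = x (y⁻¹ (x q)) := ypre y hy _ (by omega)
    rw [Equiv.Perm.apply_inv_self] at h1
    have h2 : y⁻¹ (x q) = q := x.injective h1.symm
    rw [h2] at hlt
    omega
  refine Finset.sum_nbij' (fun z => z * Equiv.swap κ (z⁻¹ (x κ)))
    (fun y => y * Equiv.swap κ (y⁻¹ (x q))) ?_ ?_ ?_ ?_ ?_
  · -- hi : maps into Pc (k+1) x
    intro z hz
    rw [mem_Pc]
    intro i hi
    rcases Nat.lt_succ_iff_lt_or_eq.1 hi with hi' | hi'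
    · have h1 : i ≠ κ := fun h => by rw [h, hκ] at hi'; omega
      have h2 : i ≠ z⁻¹ (x κ) := fun h => (hu z hz) (by rw [← h]; exact hi')
      rw [Equiv.Perm.mul_apply, Equiv.swap_apply_of_ne_of_ne h1 h2]
      exact zpre z hz i hi'
    · have h1 : i = κ := Fin.ext (by rw [hκ]; exact hi')
      rw [h1, Equiv.Perm.mul_apply, Equiv.swap_apply_left, Equiv.Perm.apply_inv_self]
  · -- hj : maps into Pc (k+1) (x * swap κ q)
    intro y hy
    rw [mem_Pc]
    intro i hi
    rcases Nat.lt_succ_iff_lt_or_eq.1 hi with hi' | hi'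
    · have h1 : i ≠ κ := fun h => by rw [h, hκ] at hi'; omega
      have h2 : i ≠ y⁻¹ (x q) := fun h => (hr y hy) (by rw [← h]; exact hi')
      have h3 : i ≠ q := fun h => by rw [h] at hi'; omega
      rw [Equiv.Perm.mul_apply, Equiv.swap_apply_of_ne_of_ne h1 h2,
        Equiv.Perm.mul_apply, Equiv.swap_apply_of_ne_of_ne h1 h3]
      exact ypre y hy i (by omega)
    · have h1 : i = κ := Fin.ext (by rw [hκ]; exact hi')
      rw [h1, Equiv.Perm.mul_apply, Equiv.swap_apply_left, Equiv.Perm.apply_inv_self,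
        Equiv.Perm.mul_apply, Equiv.swap_apply_left]
  · -- left inverse
    intro z hz
    have h1 : (z * Equiv.swap κ (z⁻¹ (x κ))) (z⁻¹ (x κ)) = x q := by
      rw [Equiv.Perm.mul_apply, Equiv.swap_apply_right]
      exact zκ z hz
    have h2 : (z * Equiv.swap κ (z⁻¹ (x κ)))⁻¹ (x q) = z⁻¹ (x κ) := by
      rw [← h1, Equiv.Perm.inv_apply_self]
    rw [h2]
    exact Equiv.mul_swap_mul_self _ _ _
  · -- right inverse
    intro y hy
    have h1 : (y * Equiv.swap κ (y⁻¹ (x q))) (y⁻¹ (x q)) = x κ := by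
      rw [Equiv.Perm.mul_apply, Equiv.swap_apply_right]
      exact ypre y hy κ (by omega)
    have h2 : (y * Equiv.swap κ (y⁻¹ (x q)))⁻¹ (x κ) = y⁻¹ (x q) := by
      rw [← h1, Equiv.Perm.inv_apply_self]
    rw [h2]
    exact Equiv.mul_swap_mul_self _ _ _
  · -- value equality
    intro z hz
    have h1 : (z * Equiv.swap κ (z⁻¹ (x κ))) (z⁻¹ (x κ)) = x q := by
      rw [Equiv.Perm.mul_apply, Equiv.swap_apply_right]
      exact zκ z hz
    have h2 : (z * Equiv.swap κ (z⁻¹ (x κ)))⁻¹ (x q) = z⁻¹ (x κ) := by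
      rw [← h1, Equiv.Perm.inv_apply_self]
    rw [h2, Equiv.mul_swap_mul_self]

lemma sum_H_reindex (hk : k < n) (f : G n → ℝ) {y x : G n} (hx : x ∈ Pc (k+1) y) :
    ∑ q ∈ Qs n k, (f y - f (y * Equiv.swap ((k:ℕ):Fin n) (y⁻¹ (x q))))^2
      = ∑ p ∈ Qs n k, (f y - f (y * Equiv.swap ((k:ℕ):Fin n) p))^2 := by
  refine Finset.sum_nbij' (fun q => y⁻¹ (x q)) (fun p => x⁻¹ (y p)) ?_ ?_ ?_ ?_ ?_
  · intro q hq
    rw [mem_Qs] at hq ⊢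
    by_contra hlt
    push_neg at hlt
    have h1 : x (y⁻¹ (x q)) = y (y⁻¹ (x q)) := mem_Pc.1 hx _ (by omega)
    rw [Equiv.Perm.apply_inv_self] at h1
    have h2 : y⁻¹ (x q) = q := x.injective h1
    rw [h2] at hlt
    omega
  · intro p hp
    rw [mem_Qs] at hp ⊢
    by_contra hlt
    push_neg at hlt
    have h1 : x (x⁻¹ (y p)) = y (x⁻¹ (y p)) := mem_Pc.1 hx _ (by omega)
    rw [Equiv.Perm.apply_inv_self] at h1
    have h2 : x⁻¹ (y p) = p := y.injective h1.symm
    rw [h2] at hlt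
    omega
  · intro q _; simp
  · intro p _; simp
  · intro q _; rfl

lemma key4 (hk : k < n) (f : G n → ℝ) :
    ∑ x : G n, ∑ q ∈ Qs n k,
        (Ee (k+1) f x - Ee (k+1) f (x * Equiv.swap ((k:ℕ):Fin n) q))^2
      ≤ ∑ p ∈ Qs n k, Dp f (Equiv.swap ((k:ℕ):Fin n) p) := by
  set κ : Fin n := ((k : ℕ) : Fin n) with hκdef
  have hc : (0:ℝ) < (cc n (k+1) : ℝ) := by exact_mod_cast cc_pos (k+1)
  have hstep : ∀ x : G n, ∀ q ∈ Qs n k,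
      (Ee (k+1) f x - Ee (k+1) f (x * Equiv.swap κ q))^2
        ≤ (∑ y ∈ Pc (k+1) x, (f y - f (y * Equiv.swap κ (y⁻¹ (x q))))^2) / (cc n (k+1) : ℝ) := by
    intro x q hq
    have hdiff : Ee (k+1) f x - Ee (k+1) f (x * Equiv.swap κ q)
        = (∑ y ∈ Pc (k+1) x, (f y - f (y * Equiv.swap κ (y⁻¹ (x q))))) / (cc n (k+1) : ℝ) := by
      rw [Ee, Ee, sum_shift hk hq x f, div_sub_div_same, ← Finset.sum_sub_distrib]
    rw [hdiff]
    have h2 := sq_div_le (Pc (k+1) x) (fun y => f y - f (y * Equiv.swap κ (y⁻¹ (x q))))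
    rwa [card_Pc] at h2
  have step2 : ∑ x : G n, ∑ q ∈ Qs n k,
      (Ee (k+1) f x - Ee (k+1) f (x * Equiv.swap κ q))^2
    ≤ (∑ x : G n, ∑ q ∈ Qs n k,
        ∑ y ∈ Pc (k+1) x, (f y - f (y * Equiv.swap κ (y⁻¹ (x q))))^2) / (cc n (k+1) : ℝ) := by
    rw [Finset.sum_div]
    refine Finset.sum_le_sum fun x _ => ?_
    rw [Finset.sum_div]
    exact Finset.sum_le_sum fun q hq => hstep x q hq
  refine step2.trans ?_
  have t1 : ∑ x : G n, ∑ q ∈ Qs n k,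
        ∑ y ∈ Pc (k+1) x, (f y - f (y * Equiv.swap κ (y⁻¹ (x q))))^2
      = ∑ y : G n, ∑ x ∈ Pc (k+1) y,
        ∑ q ∈ Qs n k, (f y - f (y * Equiv.swap κ (y⁻¹ (x q))))^2 := by
    rw [Finset.sum_congr rfl fun x _ => Finset.sum_comm]
    exact sum_sum_Pc (k+1) _
  have t2 : ∑ y : G n, ∑ x ∈ Pc (k+1) y,
        ∑ q ∈ Qs n k, (f y - f (y * Equiv.swap κ (y⁻¹ (x q))))^2
      = ∑ y : G n, (cc n (k+1) : ℝ) * ∑ p ∈ Qs n k, (f y - f (y * Equiv.swap κ p))^2 := by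
    refine Finset.sum_congr rfl fun y _ => ?_
    rw [Finset.sum_congr rfl fun x hx => sum_H_reindex hk f hx]
    rw [Finset.sum_const, card_Pc, nsmul_eq_mul]
  rw [t1, t2, ← Finset.mul_sum, mul_comm, mul_div_assoc, div_self hc.ne', mul_one]
  rw [Finset.sum_comm]
  refine le_of_eq (Finset.sum_congr rfl fun p _ => ?_)
  rw [Dp]
  exact Finset.sum_congr rfl fun y _ => by ring

lemma key3 (hk : k < n) (f : G n → ℝ) :
    ∑ x : G n, (Ee (k+1) f x - Ee k f x)^2
      ≤ (∑ p ∈ Qs n k, Dp f (Equiv.swap ((k:ℕ):Fin n) p)) / ((n - k : ℕ) : ℝ) := by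
  set κ : Fin n := ((k : ℕ) : Fin n) with hκdef
  have hm : (0:ℝ) < ((n - k : ℕ) : ℝ) := by
    have : 0 < n - k := by omega
    exact_mod_cast this
  have per : ∀ x : G n, (Ee (k+1) f x - Ee k f x)^2
      ≤ (∑ q ∈ Qs n k, (Ee (k+1) f x - Ee (k+1) f (x * Equiv.swap κ q))^2) / ((n - k : ℕ) : ℝ) := by
    intro x
    have h1 : Ee (k+1) f x - Ee k f x
        = (∑ q ∈ Qs n k, (Ee (k+1) f x - Ee (k+1) f (x * Equiv.swap κ q))) / ((n - k : ℕ) : ℝ) := by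
      rw [Ee_avg hk f x, Finset.sum_sub_distrib, Finset.sum_const, card_Qs k hk.le, sub_div,
        nsmul_eq_mul]
      congr 1
      field_simp
    rw [h1]
    have h2 := sq_div_le (Qs n k) (fun q => Ee (k+1) f x - Ee (k+1) f (x * Equiv.swap κ q))
    rwa [card_Qs k hk.le] at h2
  calc ∑ x : G n, (Ee (k+1) f x - Ee k f x)^2
      ≤ ∑ x : G n, (∑ q ∈ Qs n k,
          (Ee (k+1) f x - Ee (k+1) f (x * Equiv.swap κ q))^2) / ((n - k : ℕ) : ℝ) :=
        Finset.sum_le_sum fun x _ => per x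
    _ = (∑ x : G n, ∑ q ∈ Qs n k,
          (Ee (k+1) f x - Ee (k+1) f (x * Equiv.swap κ q))^2) / ((n - k : ℕ) : ℝ) :=
        (Finset.sum_div _ _ _).symm
    _ ≤ _ := by
        rw [div_le_div_iff₀ hm hm]
        have := key4 hk f
        nlinarith

end Partition

theorem ES [NeZero n] (f : G n → ℝ) (h0 : ∑ x : G n, f x = 0) :
    ∑ x : G n, (f x)^2
      ≤ ∑ k ∈ Finset.range n,
          (∑ p ∈ Qs n k, Dp f (Equiv.swap ((k:ℕ):Fin n) p)) / ((n - k : ℕ) : ℝ) := by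
  have h1 : ∑ x : G n, (f x)^2 = ∑ k ∈ Finset.range n, ∑ x : G n, (Ee (k+1) f x - Ee k f x)^2 := by
    rw [Finset.sum_congr rfl (fun k _ => step_eq k f),
      Finset.sum_range_sub (fun k => ∑ x : G n, f x * Ee k f x) n]
    have e1 : ∑ x : G n, f x * Ee n f x = ∑ x : G n, (f x)^2 :=
      Finset.sum_congr rfl fun x _ => by rw [Ee_top]; ring
    have e0 : ∑ x : G n, f x * Ee 0 f x = 0 := by
      rw [Finset.sum_congr rfl fun x _ => by rw [Ee_zero, h0, zero_div, mul_zero]]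
      exact Finset.sum_const_zero
    rw [e1, e0, sub_zero]
  rw [h1]
  exact Finset.sum_le_sum fun k hk => key3 (Finset.mem_range.1 hk) f


section Graph

variable (m : ℕ)

open Classical in
def Q2 (f : G (m+2) → ℝ) : ℝ :=
  ∑ x : G (m+2), ∑ y : G (m+2), if (snGraph m).Adj x y then (f x - f y)^2 else 0

lemma Q2_nonneg (f : G (m+2) → ℝ) : 0 ≤ Q2 m f := by
  apply Finset.sum_nonneg; intro x _
  apply Finset.sum_nonneg; intro y _
  split_ifs
  · positivity
  · exact le_refl 0

lemma zero_ne_one_fin : (0 : Fin (m+2)) ≠ 1 := by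
  apply Fin.ne_of_val_ne
  simp [Fin.val_one]

lemma snGen_ne_one {s : Equiv.Perm (Fin (m+2))} (hs : s ∈ snGen m) : s ≠ 1 := by
  rcases hs with h | h | h
  · rw [h]
    rw [Ne, Equiv.swap_eq_one_iff]
    exact zero_ne_one_fin m
  · rw [h]
    intro hcon
    have h0 : finRotate (m+2) 0 = 0 := by rw [hcon]; rfl
    rw [finRotate_succ_apply, zero_add] at h0
    exact (zero_ne_one_fin m) h0.symm
  · rw [h, Ne, inv_eq_one]
    intro hcon
    have h0 : finRotate (m+2) 0 = 0 := by rw [hcon]; rfl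
    rw [finRotate_succ_apply, zero_add] at h0
    exact (zero_ne_one_fin m) h0.symm

lemma adj_right (x : G (m+2)) {s : G (m+2)} (hs : s ∈ snGen m) :
    (snGraph m).Adj x (x * s) := by
  constructor
  · intro hcon
    exact snGen_ne_one m hs (mul_left_cancel (a := x) (by rw [← hcon, mul_one])).symm
  · rw [inv_mul_cancel_left]
    exact hs

open Classical in
lemma Dp_le_Q2 (f : G (m+2) → ℝ) {s : G (m+2)} (hs : s ∈ snGen m) :
    Dp f s ≤ Q2 m f := by
  rw [Dp, Q2]
  refine Finset.sum_le_sum fun x _ => ?_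
  have hx : (if (snGraph m).Adj x (x * s) then (f x - f (x*s))^2 else 0) = (f (x*s) - f x)^2 := by
    rw [if_pos (adj_right m x hs)]; ring
  rw [← hx]
  exact Finset.single_le_sum (f := fun y => if (snGraph m).Adj x y then (f x - f y)^2 else 0)
    (fun y _ => by split_ifs <;> positivity)
    (Finset.mem_univ (x * s))

lemma norm_vecD_gen_le (f : G (m+2) → ℝ) {s : G (m+2)} (hs : s ∈ snGen m) :
    ‖vecD f s‖ ≤ Real.sqrt (Q2 m f) := by
  rw [← Real.sqrt_sq (norm_nonneg (vecD f s))]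
  apply Real.sqrt_le_sqrt
  rw [← Dp_eq_norm_sq]
  exact Dp_le_Q2 m f hs

lemma Dp_swap_le (f : G (m+2) → ℝ) (k : ℕ) (hk : k < m+2) (q : Fin (m+2)) (hq : k ≤ (q:ℕ)) :
    Dp f (Equiv.swap ((k : ℕ) : Fin (m+2)) q) ≤ 36 * ((m+2 : ℕ) : ℝ)^2 * Q2 m f := by
  have ha : ‖vecD f (Equiv.swap (0 : Fin (m+2)) 1)‖ ≤ Real.sqrt (Q2 m f) :=
    norm_vecD_gen_le m f (Or.inl rfl)
  have hc : ‖vecD f (finRotate (m+2))‖ ≤ Real.sqrt (Q2 m f) :=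
    norm_vecD_gen_le m f (Or.inr (Or.inl rfl))
  have hval : (((k : ℕ) : Fin (m+2)) : ℕ) ≤ (q : ℕ) := by
    rw [Fin.val_cast_of_lt hk]; exact hq
  have h := norm_vecD_swap f (Real.sqrt (Q2 m f)) ha hc ((k : ℕ) : Fin (m+2)) q hval
  rw [Dp_eq_norm_sq]
  have h2 : ‖vecD f (Equiv.swap ((k : ℕ) : Fin (m+2)) q)‖^2
      ≤ (6 * ((m:ℝ) + 2) * Real.sqrt (Q2 m f))^2 := by
    apply pow_le_pow_left₀ (norm_nonneg _)
    exact_mod_cast h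
  refine h2.trans (le_of_eq ?_)
  have hQ : Real.sqrt (Q2 m f) ^ 2 = Q2 m f := Real.sq_sqrt (Q2_nonneg m f)
  push_cast
  nlinarith [hQ]

theorem poincare (f : G (m+2) → ℝ) (h0 : ∑ x : G (m+2), f x = 0) :
    ∑ x : G (m+2), (f x)^2 ≤ 36 * ((m+2 : ℕ) : ℝ)^3 * Q2 m f := by
  refine (ES f h0).trans ?_
  have bound : ∀ k ∈ Finset.range (m+2),
      (∑ p ∈ Qs (m+2) k, Dp f (Equiv.swap ((k:ℕ) : Fin (m+2)) p)) / (((m+2) - k : ℕ) : ℝ)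
        ≤ 36 * ((m+2 : ℕ) : ℝ)^2 * Q2 m f := by
    intro k hk
    rw [Finset.mem_range] at hk
    have hm : (0:ℝ) < (((m+2) - k : ℕ) : ℝ) := by
      have : 0 < (m+2) - k := by omega
      exact_mod_cast this
    rw [div_le_iff₀ hm]
    calc ∑ p ∈ Qs (m+2) k, Dp f (Equiv.swap ((k:ℕ) : Fin (m+2)) p)
        ≤ ∑ _p ∈ Qs (m+2) k, 36 * ((m+2 : ℕ) : ℝ)^2 * Q2 m f :=
          Finset.sum_le_sum fun p hp => Dp_swap_le m f k hk p (mem_Qs.1 hp)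
      _ = ((m+2) - k : ℕ) * (36 * ((m+2 : ℕ) : ℝ)^2 * Q2 m f) := by
          rw [Finset.sum_const, card_Qs k hk.le, nsmul_eq_mul]
      _ = 36 * ((m+2 : ℕ) : ℝ)^2 * Q2 m f * (((m+2) - k : ℕ) : ℝ) := by ring
  calc ∑ k ∈ Finset.range (m+2),
        (∑ p ∈ Qs (m+2) k, Dp f (Equiv.swap ((k:ℕ) : Fin (m+2)) p)) / (((m+2) - k : ℕ) : ℝ)
      ≤ ∑ _k ∈ Finset.range (m+2), 36 * ((m+2 : ℕ) : ℝ)^2 * Q2 m f :=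
        Finset.sum_le_sum bound
    _ = ((m+2 : ℕ) : ℝ) * (36 * ((m+2 : ℕ) : ℝ)^2 * Q2 m f) := by
        rw [Finset.sum_const, Finset.card_range, nsmul_eq_mul]
    _ = 36 * ((m+2 : ℕ) : ℝ)^3 * Q2 m f := by push_cast; ring

/-! ## spectral part -/

open Classical in
lemma mulVec_expand (f : G (m+2) → ℝ) (x : G (m+2)) :
    ((-(lapMat (snGraph m))) *ᵥ f) x
      = ∑ y : G (m+2), ((if x = y then (degC (snGraph m) x : ℝ) else 0)
          - if (snGraph m).Adj x y then (1:ℝ) else 0) * f y := by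
  simp only [Matrix.mulVec, dotProduct, Matrix.neg_apply, lapMat, Matrix.of_apply, neg_sub]
  exact Finset.sum_congr rfl fun y _ => by congr!

open Classical in
lemma deg_row (x : G (m+2)) (c : ℝ) :
    ∑ y : G (m+2), (if (snGraph m).Adj x y then c else 0) = (degC (snGraph m) x : ℝ) * c := by
  rw [← Finset.sum_filter, Finset.sum_const, degC, nsmul_eq_mul]

open Classical in
lemma quad_eq (f : G (m+2) → ℝ) :
    ∑ x : G (m+2), f x * ((-(lapMat (snGraph m))) *ᵥ f) x = Q2 m f / 2 := by
  have hx : ∀ x : G (m+2), f x * ((-(lapMat (snGraph m))) *ᵥ f) x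
      = (degC (snGraph m) x : ℝ) * (f x)^2
        - ∑ y : G (m+2), (if (snGraph m).Adj x y then f x * f y else 0) := by
    intro x
    rw [mulVec_expand, Finset.mul_sum]
    have hterm : ∀ y : G (m+2), f x * (((if x = y then (degC (snGraph m) x : ℝ) else 0)
        - if (snGraph m).Adj x y then (1:ℝ) else 0) * f y)
        = (if x = y then (degC (snGraph m) x : ℝ) * (f x * f y) else 0)
          - (if (snGraph m).Adj x y then f x * f y else 0) := by
      intro y; split_ifs <;> ring
    rw [Finset.sum_congr rfl fun y _ => hterm y, Finset.sum_sub_distrib]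
    congr 1
    have hcollapse : ∑ y : G (m+2), (if x = y then (degC (snGraph m) x : ℝ) * (f x * f y) else 0)
        = (degC (snGraph m) x : ℝ) * (f x * f x) := by
      simp
    rw [hcollapse]
    ring
  rw [Finset.sum_congr rfl fun x _ => hx x, Finset.sum_sub_distrib]
  set S : ℝ := ∑ x : G (m+2), (degC (snGraph m) x : ℝ) * (f x)^2 with hS
  set C : ℝ := ∑ x : G (m+2), ∑ y : G (m+2), (if (snGraph m).Adj x y then f x * f y else 0)
    with hC
  have hQ : Q2 m f = S + S - 2 * C := by
    rw [Q2]
    have hsplit : ∀ x y : G (m+2), (if (snGraph m).Adj x y then (f x - f y)^2 else 0)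
        = (if (snGraph m).Adj x y then (f x)^2 else 0)
          + (if (snGraph m).Adj x y then (f y)^2 else 0)
          - 2 * (if (snGraph m).Adj x y then f x * f y else 0) := by
      intro x y; split_ifs <;> ring
    have e1 : ∀ x : G (m+2), ∑ y : G (m+2), (if (snGraph m).Adj x y then (f x - f y)^2 else 0)
        = (degC (snGraph m) x : ℝ) * (f x)^2
          + (∑ y : G (m+2), (if (snGraph m).Adj x y then (f y)^2 else 0))
          - 2 * ∑ y : G (m+2), (if (snGraph m).Adj x y then f x * f y else 0) := by
      intro x
      rw [Finset.sum_congr rfl fun y _ => hsplit x y, Finset.sum_sub_distrib,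
        Finset.sum_add_distrib, ← Finset.mul_sum, deg_row]
    rw [Finset.sum_congr rfl fun x _ => e1 x, Finset.sum_sub_distrib, Finset.sum_add_distrib]
    have e2 : ∑ x : G (m+2), ∑ y : G (m+2), (if (snGraph m).Adj x y then (f y)^2 else 0)
        = S := by
      rw [Finset.sum_comm]
      refine Finset.sum_congr rfl fun y _ => ?_
      have hcg : ∀ x : G (m+2), (if (snGraph m).Adj x y then (f y)^2 else 0)
          = (if (snGraph m).Adj y x then (f y)^2 else 0) :=
        fun x => if_congr ((snGraph m).adj_comm x y) rfl rfl
      rw [Finset.sum_congr rfl fun x _ => hcg x]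
      exact deg_row m y ((f y)^2)
    rw [e2, ← Finset.mul_sum, ← hC, ← hS]
  rw [hQ]
  ring

open Classical in
lemma col_sum (y : G (m+2)) :
    ∑ x : G (m+2), (-(lapMat (snGraph m))) x y = 0 := by
  have hterm : ∀ x : G (m+2), (-(lapMat (snGraph m))) x y
      = (if x = y then (degC (snGraph m) x : ℝ) else 0)
        - (if (snGraph m).Adj x y then (1:ℝ) else 0) := by
    intro x
    simp only [Matrix.neg_apply, lapMat, Matrix.of_apply, neg_sub]
    congr!
  rw [Finset.sum_congr rfl fun x _ => hterm x, Finset.sum_sub_distrib]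
  have h1 : ∑ x : G (m+2), (if x = y then (degC (snGraph m) x : ℝ) else 0)
      = (degC (snGraph m) y : ℝ) := by
    simp
  have h2 : ∑ x : G (m+2), (if (snGraph m).Adj x y then (1:ℝ) else 0)
      = (degC (snGraph m) y : ℝ) := by
    have : ∀ x : G (m+2), (if (snGraph m).Adj x y then (1:ℝ) else 0)
        = (if (snGraph m).Adj y x then (1:ℝ) else 0) :=
      fun x => if_congr ((snGraph m).adj_comm x y) rfl rfl
    rw [Finset.sum_congr rfl fun x _ => this x]
    exact deg_row m y 1 |>.trans (mul_one _)
  rw [h1, h2, sub_self]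

lemma eig_lower {μ : ℝ} {f : G (m+2) → ℝ} (hμ : μ ≠ 0) (hf : f ≠ 0)
    (heig : (-(lapMat (snGraph m))) *ᵥ f = μ • f) :
    1 / (72 * ((m+2 : ℕ) : ℝ)^3) ≤ μ := by
  have hsum0 : ∑ x : G (m+2), f x = 0 := by
    have h1 : ∑ x : G (m+2), ((-(lapMat (snGraph m))) *ᵥ f) x = μ * ∑ x : G (m+2), f x := by
      rw [heig]
      rw [Finset.mul_sum]
      exact Finset.sum_congr rfl fun x _ => rfl
    have h2 : ∑ x : G (m+2), ((-(lapMat (snGraph m))) *ᵥ f) x = 0 := by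
      have expand : ∀ x : G (m+2), ((-(lapMat (snGraph m))) *ᵥ f) x
          = ∑ y : G (m+2), (-(lapMat (snGraph m))) x y * f y := by
        intro x
        simp only [Matrix.mulVec, dotProduct]
      rw [Finset.sum_congr rfl fun x _ => expand x, Finset.sum_comm]
      rw [Finset.sum_congr rfl fun y _ => (Finset.sum_mul _ _ _).symm]
      rw [Finset.sum_congr rfl fun y _ => by rw [col_sum m y, zero_mul]]
      exact Finset.sum_const_zero
    rw [h2] at h1
    rcases mul_eq_zero.1 h1.symm with h | h
    · exact absurd h hμ
    · exact h
  have hfsq : 0 < ∑ x : G (m+2), (f x)^2 := by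
    rcases Function.ne_iff.1 hf with ⟨x, hx⟩
    apply Finset.sum_pos' (fun y _ => sq_nonneg _)
    exact ⟨x, Finset.mem_univ x, lt_of_le_of_ne (sq_nonneg _) (Ne.symm (pow_ne_zero 2 hx))⟩
  have hquad : μ * ∑ x : G (m+2), (f x)^2 = Q2 m f / 2 := by
    rw [← quad_eq m f, heig]
    rw [Finset.mul_sum]
    exact Finset.sum_congr rfl fun x _ => by
      show μ * (f x)^2 = f x * (μ • f) x
      rw [Pi.smul_apply, smul_eq_mul]; ring
  have hpoin := poincare m f hsum0
  have hn2 : (0:ℝ) < ((m+2 : ℕ) : ℝ) := by exact_mod_cast Nat.succ_pos (m+1)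
  have hn3 : (0:ℝ) < ((m+2 : ℕ) : ℝ)^3 := by positivity
  rw [div_le_iff₀ (mul_pos (by norm_num : (0:ℝ) < 72) hn3)]
  have key : μ * (72 * ((m+2 : ℕ) : ℝ)^3) * (∑ x : G (m+2), (f x)^2)
      ≥ 1 * (∑ x : G (m+2), (f x)^2) := by
    have : μ * (72 * ((m+2 : ℕ) : ℝ)^3) * (∑ x : G (m+2), (f x)^2)
        = 36 * ((m+2 : ℕ) : ℝ)^3 * Q2 m f := by
      rw [show μ * (72 * ((m+2 : ℕ) : ℝ)^3) * (∑ x : G (m+2), (f x)^2)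
        = (μ * ∑ x : G (m+2), (f x)^2) * (72 * ((m+2 : ℕ) : ℝ)^3) from by ring, hquad]
      ring
    rw [this, one_mul]
    exact hpoin
  nlinarith [key, hfsq]


open Classical in
lemma lap_isHermitian : (-(lapMat (snGraph m))).IsHermitian := by
  show (-(lapMat (snGraph m)))ᴴ = -(lapMat (snGraph m))
  refine Matrix.ext fun x y => ?_
  rw [Matrix.conjTranspose_apply]
  rw [star_trivial]
  simp only [Matrix.neg_apply, lapMat, Matrix.of_apply, neg_sub]
  by_cases h : x = y
  · subst h; rfl
  · rw [if_neg h, if_neg (Ne.symm h), if_congr ((snGraph m).adj_comm y x) rfl rfl]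

open Classical in
lemma lap_ne_zero : (-(lapMat (snGraph m))) ≠ 0 := by
  intro hcon
  have hadj : (snGraph m).Adj 1 (Equiv.swap 0 1) := by
    have := adj_right m 1 (Or.inl rfl : Equiv.swap (0 : Fin (m+2)) 1 ∈ snGen m)
    rwa [one_mul] at this
  have hne : (1 : G (m+2)) ≠ Equiv.swap 0 1 := fun h =>
    snGen_ne_one m (Or.inl rfl : Equiv.swap (0 : Fin (m+2)) 1 ∈ snGen m) h.symm
  have hval : (-(lapMat (snGraph m))) 1 (Equiv.swap 0 1) = -1 := by
    simp only [Matrix.neg_apply, lapMat, Matrix.of_apply, neg_sub]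
    rw [if_neg hne, if_pos hadj]
    ring
  rw [hcon] at hval
  simp at hval

theorem gap_lower : 1 / (72 * ((m+2 : ℕ) : ℝ)^3) ≤ spectralGap (snGraph m) := by
  rw [spectralGap]
  apply le_csInf
  · obtain ⟨v, t, ht, hv, heig⟩ :=
      (lap_isHermitian m).exists_eigenvector_of_ne_zero (lap_ne_zero m)
    exact ⟨t, ht, v, hv, heig⟩
  · rintro μ ⟨hμ, f, hf, heig⟩
    exact eig_lower m hμ hf heig

end Graph
end SGL

/-- there is `c₂ > 0`, independent of `n`, such that the Cayley graph of
`Sₙ` with generators `{(12), (12⋯n)^{±1}}` has spectral gap `λ ≥ c₂ n⁻³` (here `n = m + 2`). -/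
theorem spectral_gap_lower_sn :
    ∃ c₂ : ℝ, 0 < c₂ ∧ ∀ m : ℕ,
      c₂ / ((m : ℝ) + 2) ^ 3 ≤ spectralGap (snGraph m) := by
  refine ⟨1/72, by norm_num, fun m => ?_⟩
  have h := SGL.gap_lower m
  have hcast : ((m : ℝ) + 2) = ((m + 2 : ℕ) : ℝ) := by push_cast; ring
  rw [hcast]
  refine le_trans (le_of_eq ?_) h
  rw [div_div]
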